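/- arXiv:2502.05648 — 9 statements merged into one kernel-verified Lean document; each statement's English description precedes it below -/
import Mathlib

section
/- Let k > 1 be an integer, let S ⊆ ℤ^n, and suppose the subgroup of ℤ^n generated by S contains (kℤ)^n. Let G be a group and let H be the subgroup of G generated by all k-th powers of elements of G. Then H^n ≤ G^S. In particular, if the k-th powers of elements of G generate G, then G^S = G^n. -/
/-- For `g` in a group `G` and `x : ℤⁿ`, `g ^ x := (g ^ x 1, ..., g ^ x n) ∈ Gⁿ`. -/
def vecPow {n : ℕ} {G : Type*} [Group G] (g : G) (x : Fin n → ℤ) : Fin n → G :=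
  fun i => g ^ x i

/-- `G^S`: the subgroup of `Gⁿ` generated by all `g ^ x` with `g ∈ G` and `x ∈ S ⊆ ℤⁿ`. -/
def latticePower {n : ℕ} (G : Type*) [Group G] (S : Set (Fin n → ℤ)) :
    Subgroup (Fin n → G) :=
  Subgroup.closure {f | ∃ (g : G) (x : Fin n → ℤ), x ∈ S ∧ f = vecPow g x}

lemma vecPow_mem {n : ℕ} {G : Type*} [Group G] (S : Set (Fin n → ℤ)) (g : G)
    {v : Fin n → ℤ} (hv : v ∈ AddSubgroup.closure S) :
    vecPow g v ∈ latticePower G S := by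
  induction hv using AddSubgroup.closure_induction with
  | mem x hx => exact Subgroup.subset_closure ⟨g, x, hx, rfl⟩
  | zero =>
      have : vecPow g (0 : Fin n → ℤ) = 1 := by
        funext i; simp [vecPow]
      rw [this]; exact one_mem _
  | add x y _ _ hx hy =>
      have : vecPow g (x + y) = vecPow g x * vecPow g y := by
        funext i; simp [vecPow, zpow_add]
      rw [this]; exact mul_mem hx hy
  | neg x _ hx =>
      have : vecPow g (-x) = (vecPow g x)⁻¹ := by
        funext i; simp [vecPow, zpow_neg]
      rw [this]; exact inv_mem hx

/-- If `(kℤ)ⁿ` is contained in the subgroup generated by `S`, and `H` is the subgroup of `G`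
generated by `k`-th powers, then `Hⁿ ≤ G^S`; in particular if `k`-th powers generate `G`,
then `G^S = Gⁿ`. -/
theorem stmt_4 {n : ℕ} (k : ℤ) (hk : 1 < k) (S : Set (Fin n → ℤ))
    (hS : ∀ v : Fin n → ℤ, (∀ i, k ∣ v i) → v ∈ AddSubgroup.closure S)
    (G : Type*) [Group G] (H : Subgroup G)
    (hH : H = Subgroup.closure {x : G | ∃ g : G, x = g ^ k}) :
    (∀ f : Fin n → G, (∀ i, f i ∈ H) → f ∈ latticePower G S) ∧
      (H = ⊤ → latticePower G S = ⊤) := by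
  have key : ∀ (i : Fin n) (g : G), Pi.mulSingle i (g ^ k) ∈ latticePower G S := by
    intro i g
    set v : Fin n → ℤ := fun j => if j = i then k else 0 with hv
    have hmem : v ∈ AddSubgroup.closure S := by
      apply hS
      intro j
      by_cases h : j = i <;> simp [hv, h]
    have : vecPow g v = Pi.mulSingle i (g ^ k) := by
      funext j
      by_cases h : j = i
      · subst h; simp [vecPow, hv]
      · simp [vecPow, hv, h, Pi.mulSingle_eq_of_ne h]
    rw [← this]
    exact vecPow_mem S g hmem
  have single : ∀ (i : Fin n) (h : G), h ∈ H → Pi.mulSingle i h ∈ latticePower G S := by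
    intro i h hh
    rw [hH] at hh
    induction hh using Subgroup.closure_induction with
    | mem x hx => obtain ⟨g, rfl⟩ := hx; exact key i g
    | one => rw [Pi.mulSingle_one]; exact one_mem _
    | mul x y _ _ hx hy =>
        have : (Pi.mulSingle i (x * y) : Fin n → G) = Pi.mulSingle i x * Pi.mulSingle i y := by
          funext j
          by_cases h : j = i
          · subst h; simp
          · simp [Pi.mulSingle_eq_of_ne h]
        rw [this]; exact mul_mem hx hy
    | inv x _ hx =>
        have : (Pi.mulSingle i x⁻¹ : Fin n → G) = (Pi.mulSingle i x)⁻¹ := by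
          funext j
          by_cases h : j = i
          · subst h; simp
          · simp [Pi.mulSingle_eq_of_ne h]
        rw [this]; exact inv_mem hx
  have main : ∀ f : Fin n → G, (∀ i, f i ∈ H) → f ∈ latticePower G S := by
    intro f hf
    rw [← Finset.noncommProd_mulSingle f]
    exact Subgroup.noncommProd_mem _ _ fun i _ => single i (f i) (hf i)
  refine ⟨main, fun hHt => ?_⟩
  rw [eq_top_iff]
  intro f _
  exact main f fun i => hHt ▸ Subgroup.mem_top _
end

section
/- Let S ⊆ ℤ^n, G a group, and K a normal subgroup of G. Then G^S = G^n if and only if K^n ≤ G^S and (G/K)^S = (G/K)^n. -/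
/-- `G^S = Gⁿ` if and only if `Kⁿ ≤ G^S` and `(G/K)^S = (G/K)ⁿ`. -/
theorem stmt_8 {n : ℕ} (S : Set (Fin n → ℤ)) (G : Type*) [Group G]
    (K : Subgroup G) [K.Normal] :
    latticePower G S = ⊤ ↔
      (Subgroup.pi Set.univ (fun _ : Fin n => K) ≤ latticePower G S ∧
        latticePower (G ⧸ K) S = ⊤) := by
  set π : (Fin n → G) →* (Fin n → G ⧸ K) :=
    Pi.monoidHom fun i => (QuotientGroup.mk' K).comp (Pi.evalMonoidHom (fun _ => G) i) with hπ
  have hπs : Function.Surjective π := by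
    intro q
    choose g hg using fun i => QuotientGroup.mk'_surjective K (q i)
    exact ⟨g, funext fun i => hg i⟩
  have hmap : (latticePower G S).map π = latticePower (G ⧸ K) S := by
    rw [latticePower, MonoidHom.map_closure, latticePower]
    congr 1
    ext f
    constructor
    · rintro ⟨_, ⟨g, x, hx, rfl⟩, rfl⟩
      exact ⟨g, x, hx, funext fun i => by simp [hπ, vecPow, Pi.monoidHom, MonoidHom.pi_apply]⟩
    · rintro ⟨q, x, hx, rfl⟩
      obtain ⟨g, rfl⟩ := QuotientGroup.mk'_surjective K q
      exact ⟨vecPow g x, ⟨g, x, hx, rfl⟩, funext fun i => by simp [hπ, vecPow, Pi.monoidHom, MonoidHom.pi_apply]⟩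
  have hker : ∀ f, π f = 1 ↔ f ∈ Subgroup.pi Set.univ (fun _ : Fin n => K) := by
    intro f
    simp [hπ, Pi.monoidHom, MonoidHom.pi_apply, Subgroup.mem_pi, funext_iff, QuotientGroup.eq_one_iff]
  constructor
  · intro h
    refine ⟨h ▸ le_top, ?_⟩
    rw [← hmap, h, Subgroup.map_top_of_surjective π hπs]
  · rintro ⟨hK, hQ⟩
    rw [eq_top_iff]
    intro f _
    have hfq : π f ∈ (latticePower G S).map π := by rw [hmap, hQ]; trivial
    obtain ⟨h, hh, hEq⟩ := hfq
    have hmem : f * h⁻¹ ∈ Subgroup.pi Set.univ (fun _ : Fin n => K) := by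
      rw [← hker]
      rw [map_mul, map_inv, hEq, mul_inv_cancel]
    have : f = (f * h⁻¹) * h := by group
    rw [this]
    exact mul_mem (hK hmem) hh
end

section
/- Let S ⊆ ℤ^n, G a group, and K a normal subgroup of G. If K^S = K^n and (G/K)^S = (G/K)^n, then G^S = G^n. -/
/-- If `K^S = Kⁿ` (inside `Kⁿ`) and `(G/K)^S = (G/K)ⁿ`, then `G^S = Gⁿ`. -/
theorem stmt_9 {n : ℕ} (S : Set (Fin n → ℤ)) (G : Type*) [Group G]
    (K : Subgroup G) [K.Normal]
    (hK : latticePower (↥K) S = ⊤) (hQ : latticePower (G ⧸ K) S = ⊤) :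
    latticePower G S = ⊤ := by
  let π : (Fin n → G) →* (Fin n → G ⧸ K) :=
    Pi.monoidHom fun i => (QuotientGroup.mk' K).comp (Pi.evalMonoidHom (fun _ => G) i)
  let ι : (Fin n → ↥K) →* (Fin n → G) :=
    Pi.monoidHom fun i => K.subtype.comp (Pi.evalMonoidHom (fun _ => ↥K) i)
  have hπmap : Subgroup.map π (latticePower G S) = latticePower (G ⧸ K) S := by
    rw [latticePower, latticePower, MonoidHom.map_closure]
    congr 1
    ext f
    constructor
    · rintro ⟨f', ⟨g, x, hx, rfl⟩, rfl⟩
      exact ⟨g, x, hx, by ext i; simp [π, vecPow, Pi.monoidHom]⟩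
    · rintro ⟨q, x, hx, rfl⟩
      obtain ⟨g, rfl⟩ := QuotientGroup.mk_surjective q
      exact ⟨vecPow g x, ⟨g, x, hx, rfl⟩, by ext i; simp [π, vecPow, Pi.monoidHom]⟩
  have hιmap : Subgroup.map ι (latticePower ↥K S) ≤ latticePower G S := by
    rw [latticePower, MonoidHom.map_closure]
    apply (Subgroup.closure_le _).2
    rintro f ⟨f', ⟨k, x, hx, rfl⟩, rfl⟩
    exact Subgroup.subset_closure ⟨(k : G), x, hx, by ext i; simp [ι, vecPow, Pi.monoidHom]⟩
  rw [eq_top_iff]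
  intro f _
  have hf : π f ∈ Subgroup.map π (latticePower G S) := by
    rw [hπmap, hQ]; trivial
  obtain ⟨h, hh, hph⟩ := hf
  have hmem : ∀ i, (h i)⁻¹ * f i ∈ K := by
    intro i
    have := congrFun hph i
    simp only [π, Pi.monoidHom_apply, MonoidHom.comp_apply, Pi.evalMonoidHom_apply,
      QuotientGroup.mk'_apply] at this
    exact (QuotientGroup.eq).1 this
  set k : Fin n → ↥K := fun i => ⟨(h i)⁻¹ * f i, hmem i⟩ with hk
  have hik : ι k ∈ latticePower G S := hιmap ⟨k, by rw [hK]; trivial, rfl⟩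
  have hfk : f = h * ι k := by
    ext i
    simp [ι, hk, Pi.monoidHom]
  rw [hfk]
  exact mul_mem hh hik
end

section
/- Suppose Γ is a finite simple graph with distinct vertices i and j having the same closed neighborhood (B(i) = B(j)). Let Γ − j be the induced subgraph on all vertices except j. Then G^Γ is isomorphic to G^{Γ−j} for every group G. -/
open Classical in
/-- "Clicking" vertex `v` with `g`: the element of `Gⁿ` with `g` on the closed
neighborhood `B(v)` of `v` and the identity elsewhere. -/
noncomputable def click {V : Type*} (Γ : SimpleGraph V) {G : Type*} [Group G]
    (g : G) (v : V) : V → G :=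
  fun w => if w = v ∨ Γ.Adj v w then g else 1

/-- `G^Γ`: the subgroup of `Gⁿ` generated by all clicks. -/
noncomputable def graphPower {V : Type*} (Γ : SimpleGraph V) (G : Type*) [Group G] :
    Subgroup (V → G) :=
  Subgroup.closure {f | ∃ (g : G) (v : V), f = click Γ g v}

/-- If distinct vertices `i` and `j` have the same closed neighborhood, then
`G^Γ ≅ G^(Γ − j)`, where `Γ − j` is the induced subgraph on the other vertices. -/
theorem stmt_11 {V : Type*} [Fintype V] (Γ : SimpleGraph V) (i j : V) (hij : i ≠ j)
    (hB : ∀ w, (w = i ∨ Γ.Adj i w) ↔ (w = j ∨ Γ.Adj j w))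
    (G : Type*) [Group G] :
    Nonempty ((graphPower Γ G) ≃* graphPower (Γ.induce {w | w ≠ j}) G) := by
  classical
  set S : Set V := {w | w ≠ j} with hSdef
  set Γ' := Γ.induce S with hΓ'
  -- restriction monoid hom
  set res : (V → G) →* (S → G) :=
    Pi.monoidHom (fun w => Pi.evalMonoidHom (fun _ : V => G) w.val) with hres
  have hresapp : ∀ (f : V → G) (w : S), res f w = f w.val := fun _ _ => rfl
  have hiS : i ∈ S := hij
  -- res of a click at v ∈ S is a click of Γ'
  have res_click : ∀ (g : G) (v : V) (hv : v ∈ S),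
      res (click Γ g v) = click Γ' g ⟨v, hv⟩ := by
    intro g v hv
    funext w
    rw [hresapp]
    simp only [click]
    have : ((w : V) = v ∨ Γ.Adj v w) ↔ (w = ⟨v, hv⟩ ∨ Γ'.Adj ⟨v, hv⟩ w) := by
      simp [hΓ', SimpleGraph.induce, Subtype.ext_iff]
    simp [this]
  -- click at j equals click at i
  have click_j : ∀ g : G, click Γ g j = click Γ g i := by
    intro g
    funext w
    simp only [click]
    have : (w = j ∨ Γ.Adj j w) ↔ (w = i ∨ Γ.Adj i w) := (hB w).symm
    simp [this]
  -- generating set image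
  have key : res '' {f | ∃ (g : G) (v : V), f = click Γ g v}
      = {f | ∃ (g : G) (v : S), f = click Γ' g v} := by
    ext f
    constructor
    · rintro ⟨f0, ⟨g, v, rfl⟩, rfl⟩
      by_cases hv : v = j
      · subst hv
        exact ⟨g, ⟨i, hiS⟩, by rw [click_j g, res_click g i hiS]⟩
      · exact ⟨g, ⟨v, hv⟩, res_click g v hv⟩
    · rintro ⟨g, ⟨v, hv⟩, rfl⟩
      exact ⟨click Γ g v, ⟨g, v, rfl⟩, res_click g v hv⟩
  have hmap : Subgroup.map res (graphPower Γ G) = graphPower Γ' G := by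
    rw [graphPower, MonoidHom.map_closure, key, graphPower]
  -- every element of graphPower Γ G has equal i and j coordinates
  have heq : ∀ f ∈ graphPower Γ G, f i = f j := by
    have : graphPower Γ G ≤
        MonoidHom.eqLocus (Pi.evalMonoidHom (fun _ : V => G) i)
          (Pi.evalMonoidHom (fun _ : V => G) j) := by
      rw [graphPower]
      apply Subgroup.closure_le _ |>.mpr
      rintro f ⟨g, v, rfl⟩
      show click Γ g v i = click Γ g v j
      simp only [click]
      have h1 : (i = v ∨ Γ.Adj v i) ↔ (v = i ∨ Γ.Adj i v) := by
        rw [eq_comm, Γ.adj_comm]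
      have h2 : (j = v ∨ Γ.Adj v j) ↔ (v = j ∨ Γ.Adj j v) := by
        rw [eq_comm, Γ.adj_comm]
      have : (i = v ∨ Γ.Adj v i) ↔ (j = v ∨ Γ.Adj v j) := by
        rw [h1, h2]; exact hB v
      simp [this]
    exact fun f hf => this hf
  -- build the hom
  let φ : (graphPower Γ G) →* (graphPower Γ' G) :=
    MonoidHom.codRestrict (res.domRestrict (graphPower Γ G)) _
      (fun x => by
        rw [← hmap]
        exact ⟨x.1, x.2, rfl⟩)
  have hinj : Function.Injective φ := by
    rw [← MonoidHom.ker_eq_bot_iff, Subgroup.eq_bot_iff_forall]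
    rintro ⟨f, hf⟩ hker
    have h1 : res f = 1 := congrArg Subtype.val (hker : φ ⟨f, hf⟩ = 1)
    have hfj : f j = 1 := by
      rw [← heq f hf]
      have := congrFun h1 ⟨i, hiS⟩
      simpa [hresapp] using this
    ext : 1
    funext w
    by_cases hw : w = j
    · subst hw; exact hfj
    · have := congrFun h1 ⟨w, hw⟩
      simpa [hresapp] using this
  have hsurj : Function.Surjective φ := by
    rintro ⟨y, hy⟩
    rw [← hmap] at hy
    obtain ⟨x, hx, hxy⟩ := hy
    exact ⟨⟨x, hx⟩, Subtype.ext hxy⟩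
  exact ⟨MulEquiv.ofBijective φ ⟨hinj, hsurj⟩⟩
end

section
/- Let Γ = P_n be the path graph on n vertices. If n ≡ 2 (mod 3), then the elementary divisors of the activation matrix A_Γ = Adj(Γ) + I_n are (1, ..., 1, 0) with n−1 ones; otherwise all n elementary divisors are 1, so ℤ^Γ = ℤ^n. -/
/-- The activation matrix `A_Γ = Adj(Γ) + I` of the path graph `P_n`
(vertex `i` adjacent to `i+1`). -/
def pathActivation (n : ℕ) : Matrix (Fin n) (Fin n) ℤ :=
  Matrix.of fun i j =>
    if i = j ∨ (i : ℕ) + 1 = (j : ℕ) ∨ (j : ℕ) + 1 = (i : ℕ) then 1 else 0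

namespace Stmt12Aux

open Matrix

def a : Matrix (Fin 3) (Fin 3) ℤ := !![1,1,0;1,1,1;0,1,1]
def u : Matrix (Fin 3) (Fin 3) ℤ := !![1,0,0;1,-1,1;-1,1,0]
def v : Matrix (Fin 3) (Fin 3) ℤ := !![1,-1,0;0,1,0;0,0,1]
def b (m : ℕ) : Matrix (Fin 3) (Fin m) ℤ :=
  Matrix.of fun i j => if (i : ℕ) = 2 ∧ (j : ℕ) = 0 then 1 else 0
def c (m : ℕ) : Matrix (Fin m) (Fin 3) ℤ :=
  Matrix.of fun i j => if (i : ℕ) = 0 ∧ (j : ℕ) = 2 then 1 else 0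
def l (m : ℕ) : Matrix (Fin m) (Fin 3) ℤ :=
  Matrix.of fun i j =>
    if (i : ℕ) = 0 then (if (j : ℕ) = 0 then 1 else if (j : ℕ) = 1 then -1 else 0) else 0
def r (m : ℕ) : Matrix (Fin 3) (Fin m) ℤ :=
  Matrix.of fun i j =>
    if (j : ℕ) = 0 then (if (i : ℕ) = 0 then 1 else if (i : ℕ) = 1 then -1 else 0) else 0

lemma a_apply (i j : Fin 3) :
    a i j = if (i : ℕ) = (j : ℕ) ∨ (i : ℕ) + 1 = (j : ℕ) ∨ (j : ℕ) + 1 = (i : ℕ) then 1 else 0 := by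
  fin_cases i <;> fin_cases j <;> decide

lemma h_uav : u * a * v = 1 := by decide

lemma h_la_c (m : ℕ) : l m * a + c m = 0 := by
  ext i j
  fin_cases j <;>
    simp only [Matrix.mul_apply, Fin.sum_univ_three, Matrix.add_apply, Matrix.of_apply, l, a, c,
      Matrix.zero_apply, Matrix.vecHead, Matrix.vecTail, Matrix.cons_val_zero,
      Matrix.cons_val_one, Matrix.head_cons, Function.comp] <;>
    norm_num [Matrix.vecHead, Matrix.vecTail] <;> split_ifs <;> norm_num

lemma h_lb (m : ℕ) : l m * b m = 0 := by
  ext i j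
  simp [Matrix.mul_apply, Fin.sum_univ_three, l, b]

lemma h_uar_ub (m : ℕ) : u * a * r m + u * b m = 0 := by
  ext i j
  fin_cases i <;>
    simp only [Matrix.mul_apply, Fin.sum_univ_three, Matrix.add_apply, Matrix.of_apply, u, a, r, b,
      Matrix.zero_apply, Matrix.vecHead, Matrix.vecTail, Matrix.cons_val_zero,
      Matrix.cons_val_one, Matrix.head_cons, Function.comp] <;>
    norm_num [Matrix.vecHead, Matrix.vecTail] <;> split_ifs <;> norm_num <;> decide

/-- The key block elimination: for any `X`,
`U₀ * fromBlocks a b c X * V₀ = fromBlocks 1 0 0 X`. -/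
lemma block_elim (m : ℕ) (X : Matrix (Fin m) (Fin m) ℤ) :
    Matrix.fromBlocks u 0 (l m) 1 * Matrix.fromBlocks a (b m) (c m) X *
      Matrix.fromBlocks v (r m) 0 1 = Matrix.fromBlocks 1 0 0 X := by
  rw [Matrix.fromBlocks_multiply, Matrix.fromBlocks_multiply]
  simp only [Matrix.zero_mul, Matrix.mul_zero, add_zero, zero_add, Matrix.mul_one,
    Matrix.one_mul, h_uav, h_la_c, h_lb, h_uar_ub]

def e (m : ℕ) : Fin 3 ⊕ Fin m ≃ Fin (m + 3) :=
  finSumFinEquiv.trans (finCongr (Nat.add_comm 3 m))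

lemma e_inl (m : ℕ) (i : Fin 3) : ((e m (Sum.inl i) : Fin (m + 3)) : ℕ) = (i : ℕ) := by
  simp [e]

lemma e_inr (m : ℕ) (i : Fin m) : ((e m (Sum.inr i) : Fin (m + 3)) : ℕ) = 3 + (i : ℕ) := by
  simp [e]; omega

lemma path_block (m : ℕ) :
    Matrix.fromBlocks a (b m) (c m) (pathActivation m) =
      (pathActivation (m + 3)).submatrix (e m) (e m) := by
  ext x y
  rcases x with i | i <;> rcases y with j | j <;>
    simp only [Matrix.fromBlocks_apply₁₁, Matrix.fromBlocks_apply₁₂, Matrix.fromBlocks_apply₂₁,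
      Matrix.fromBlocks_apply₂₂, Matrix.submatrix_apply, pathActivation, Matrix.of_apply,
      Fin.ext_iff, e_inl, e_inr, a_apply, b, c] <;>
    (have hi := i.isLt; have hj := j.isLt; split_ifs <;> omega)

lemma diag_block (m : ℕ) :
    Matrix.fromBlocks (1 : Matrix (Fin 3) (Fin 3) ℤ) 0 0
        (Matrix.diagonal (fun i : Fin m =>
          if m % 3 = 2 ∧ (i : ℕ) = m - 1 then (0 : ℤ) else 1)) =
      (Matrix.diagonal (fun i : Fin (m + 3) =>
          if (m + 3) % 3 = 2 ∧ (i : ℕ) = m + 3 - 1 then (0 : ℤ) else 1)).submatrix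
        (e m) (e m) := by
  have hm3 : (m + 3) % 3 = m % 3 := by omega
  rw [← Matrix.diagonal_one, Matrix.fromBlocks_diagonal]
  ext x y
  rcases x with i | i <;> rcases y with j | j <;>
    simp only [Matrix.submatrix_apply, Matrix.diagonal_apply, EmbeddingLike.apply_eq_iff_eq,
      Sum.elim_inl, Sum.elim_inr, Sum.inl.injEq, Sum.inr.injEq, reduceCtorEq, if_false,
      Pi.one_apply]
  · rcases eq_or_ne i j with h | h
    · subst h
      have hi : ((e m (Sum.inl i) : Fin (m + 3)) : ℕ) = (i : ℕ) := e_inl m i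
      have := i.isLt
      simp only [if_pos rfl, Fin.ext_iff, hi]
      split_ifs <;> omega
    · simp [h]
  · rcases eq_or_ne i j with h | h
    · subst h
      have hi : ((e m (Sum.inr i) : Fin (m + 3)) : ℕ) = 3 + (i : ℕ) := e_inr m i
      have := i.isLt
      simp only [if_pos rfl, Fin.ext_iff, hi, hm3]
      split_ifs <;> omega
    · simp [h]

lemma det_u : IsUnit u.det := by decide
lemma det_v : IsUnit v.det := by decide

end Stmt12Aux

/-- The elementary divisors of the path graph `P_n` are `(1^{n-1}, 0)` when `n ≡ 2 (mod 3)`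
and `(1^n)` otherwise: there is a Smith normal form decomposition with this diagonal. -/
theorem stmt_12 (n : ℕ) :
    ∃ U V : Matrix (Fin n) (Fin n) ℤ, IsUnit U.det ∧ IsUnit V.det ∧
      U * pathActivation n * V =
        Matrix.diagonal (fun i : Fin n =>
          if n % 3 = 2 ∧ (i : ℕ) = n - 1 then 0 else 1) := by
  induction n using Nat.strong_induction_on with
  | _ n ih =>
  match n, ih with
  | 0, _ =>
    exact ⟨1, 1, by simp, by simp, Subsingleton.elim _ _⟩
  | 1, _ =>
    refine ⟨1, 1, by simp, by simp, ?_⟩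
    have h1 : pathActivation 1 = 1 := by
      ext i j
      fin_cases i <;> fin_cases j <;> simp [pathActivation]
    have hD : Matrix.diagonal (fun i : Fin 1 =>
        if 1 % 3 = 2 ∧ (i : ℕ) = 1 - 1 then (0 : ℤ) else 1) = 1 := by
      ext i j
      fin_cases i <;> fin_cases j <;> simp [Matrix.diagonal_apply]
    rw [h1, hD, Matrix.one_mul, Matrix.mul_one]
  | 2, _ =>
    have h2 : pathActivation 2 = !![1,1;1,1] := by
      ext i j
      fin_cases i <;> fin_cases j <;> simp [pathActivation]
    have hD : Matrix.diagonal (fun i : Fin 2 =>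
        if 2 % 3 = 2 ∧ (i : ℕ) = 2 - 1 then (0 : ℤ) else 1) = !![1,0;0,0] := by
      ext i j
      fin_cases i <;> fin_cases j <;> simp [Matrix.diagonal_apply]
    refine ⟨!![1,0;-1,1], !![1,-1;0,1], by simp [Matrix.det_fin_two], by
      simp [Matrix.det_fin_two], ?_⟩
    rw [h2, hD]
    decide
  | (m + 3), ih =>
    obtain ⟨U', V', hU', hV', hUV'⟩ := ih m (by omega)
    classical
    open Matrix Stmt12Aux in
    refine ⟨((Matrix.fromBlocks 1 0 0 U' * Matrix.fromBlocks u 0 (l m) 1).submatrix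
        (e m).symm (e m).symm),
      ((Matrix.fromBlocks v (r m) 0 1 * Matrix.fromBlocks 1 0 0 V').submatrix
        (e m).symm (e m).symm), ?_, ?_, ?_⟩
    · rw [Matrix.det_submatrix_equiv_self, Matrix.det_mul, Matrix.det_fromBlocks_zero₁₂,
        Matrix.det_fromBlocks_zero₁₂, Matrix.det_one, Matrix.det_one, one_mul, mul_one]
      exact hU'.mul det_u
    · rw [Matrix.det_submatrix_equiv_self, Matrix.det_mul, Matrix.det_fromBlocks_zero₂₁,
        Matrix.det_fromBlocks_zero₁₂, Matrix.det_one, Matrix.det_one, one_mul, mul_one]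
      exact det_v.mul hV'
    · have hpath : pathActivation (m + 3) =
          (Matrix.fromBlocks a (b m) (c m) (pathActivation m)).submatrix
            (e m).symm (e m).symm := by
        rw [path_block, Matrix.submatrix_submatrix, Equiv.self_comp_symm,
          Matrix.submatrix_id_id]
      rw [hpath, Matrix.submatrix_mul_equiv, Matrix.submatrix_mul_equiv]
      have key : Matrix.fromBlocks 1 0 0 U' * Matrix.fromBlocks u 0 (l m) 1 *
            Matrix.fromBlocks a (b m) (c m) (pathActivation m) *
            (Matrix.fromBlocks v (r m) 0 1 * Matrix.fromBlocks 1 0 0 V') =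
          Matrix.fromBlocks 1 0 0 (U' * pathActivation m * V') := by
        have h1 := block_elim m (pathActivation m)
        calc Matrix.fromBlocks 1 0 0 U' * Matrix.fromBlocks u 0 (l m) 1 *
              Matrix.fromBlocks a (b m) (c m) (pathActivation m) *
              (Matrix.fromBlocks v (r m) 0 1 * Matrix.fromBlocks 1 0 0 V') =
            Matrix.fromBlocks 1 0 0 U' *
              (Matrix.fromBlocks u 0 (l m) 1 *
                Matrix.fromBlocks a (b m) (c m) (pathActivation m) *
                Matrix.fromBlocks v (r m) 0 1) * Matrix.fromBlocks 1 0 0 V' := by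
              simp only [Matrix.mul_assoc]
          _ = Matrix.fromBlocks 1 0 0 U' * Matrix.fromBlocks 1 0 0 (pathActivation m) *
              Matrix.fromBlocks 1 0 0 V' := by rw [h1]
          _ = Matrix.fromBlocks 1 0 0 (U' * pathActivation m * V') := by
              rw [Matrix.fromBlocks_multiply, Matrix.fromBlocks_multiply]
              simp
      rw [key, hUV', diag_block, Matrix.submatrix_submatrix, Equiv.self_comp_symm,
        Matrix.submatrix_id_id]
end

section
/- Let Γ = C_n be the cycle graph on n vertices (n ≥ 3). If 3 divides n, then the elementary divisors of A_Γ = Adj(Γ) + I_n are (1^{n−2}, 0, 0); otherwise they are (1^{n−1}, 3). -/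
open Matrix

/-- The activation matrix `A_Γ = Adj(Γ) + I` of the cycle graph `C_n`
(vertex `i` adjacent to `i ± 1 (mod n)`). -/
def cycleActivation (n : ℕ) : Matrix (Fin n) (Fin n) ℤ :=
  Matrix.of fun i j =>
    if i = j ∨ ((i : ℕ) + 1) % n = (j : ℕ) ∨ ((j : ℕ) + 1) % n = (i : ℕ) then 1 else 0

private def uu (n i : ℕ) : ℤ :=
  if n % 3 = 0 then (if i % 3 = 0 then -1 else if i % 3 = 1 then 1 else 0)
  else if n % 3 = 1 then
    (if i = n-1 then -1 else if i = n-2 then 0 else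
      if i % 3 = 0 then 1 else if i % 3 = 1 then 0 else -1)
  else
    (if i = n-1 then -1 else if i = n-2 then 1 else
      if i % 3 = 0 then 0 else if i % 3 = 1 then 1 else -1)

private def vv (n i : ℕ) : ℤ :=
  if n % 3 = 0 then (if i % 3 = 0 then 0 else if i % 3 = 1 then -1 else 1)
  else if n % 3 = 1 then (if i = n-1 then 1 else if i % 3 = 0 then -2 else 1)
  else (if i = n-1 then 2 else if i % 3 = 0 then -1 else if i % 3 = 1 then -1 else 2)

private def Mg (n : ℕ) : Matrix (Fin n) (Fin n) ℤ :=
  of fun i j => if (i:ℕ) = j ∨ ((j:ℕ)+1) % n = i ∨ ((j:ℕ)+2) % n = i then 1 else 0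

private def Pm (n : ℕ) : Matrix (Fin n) (Fin n) ℤ :=
  of fun i j => if ((j:ℕ)+1) % n = (i:ℕ) then 1 else 0

private def Bm (n : ℕ) : Matrix (Fin n) (Fin n) ℤ :=
  of fun i j =>
    if (j:ℕ) < n-2 then (if (i:ℕ) = j ∨ (j:ℕ)+1 = i ∨ (j:ℕ)+2 = i then 1 else 0)
    else if (j:ℕ) = n-2 then
      (if (i:ℕ) = n-2 then 1 else if (i:ℕ) = n-1 ∧ ¬ n % 3 = 0 then -1 else 0)
    else (if (i:ℕ) = n-1 then 1 else 0)

private def Vm (n : ℕ) : Matrix (Fin n) (Fin n) ℤ :=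
  of fun i j =>
    if (j:ℕ) < n-2 then (if (i:ℕ) = j then 1 else 0)
    else if (j:ℕ) = n-2 then uu n i else vv n i

private def Dd (n : ℕ) : Fin n → ℤ := fun i =>
  if 3 ∣ n then (if n - 2 ≤ (i : ℕ) then 0 else 1)
  else (if (i : ℕ) = n - 1 then 3 else 1)

private lemma mod2n' {n x : ℕ} (h2 : x < 2*n) :
    x % n = if x < n then x else x - n := by
  split_ifs with h
  · exact Nat.mod_eq_of_lt h
  · rw [Nat.mod_eq_sub_mod (by omega)]
    exact Nat.mod_eq_of_lt (by omega)

set_option maxHeartbeats 4000000 in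
private lemma L1 {n i : ℕ} (hn : 3 ≤ n) (hi : i < n) :
    uu n i + uu n ((i+(n-1)) % n) + uu n ((i+(n-2)) % n)
      = if n % 3 = 0 then 0 else if i = n-2 then 1 else if i = n-1 then -1 else 0 := by
  have e1 : (i+(n-1)) % n = if i = 0 then n-1 else i-1 := by
    rw [mod2n' (by omega)]; split_ifs <;> omega
  have e2 : (i+(n-2)) % n = if i = 0 then n-2 else if i = 1 then n-1 else i-2 := by
    rw [mod2n' (by omega)]; split_ifs <;> omega
  rw [e1, e2]
  have h3 : n % 3 = 0 ∨ n % 3 = 1 ∨ n % 3 = 2 := by omega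
  rcases h3 with h3 | h3 | h3 <;>
    simp only [uu, h3, if_true, if_false, reduceIte, show (0:ℕ) ≠ 1 by omega,
      show ¬(1:ℕ) = 0 by omega, show ¬(2:ℕ) = 0 by omega, show ¬(2:ℕ) = 1 by omega] <;>
    split_ifs <;> omega

set_option maxHeartbeats 4000000 in
private lemma L2 {n i : ℕ} (hn : 3 ≤ n) (hi : i < n) :
    vv n i + vv n ((i+(n-1)) % n) + vv n ((i+(n-2)) % n)
      = if n % 3 = 0 then 0 else if i = n-1 then 3 else 0 := by
  have e1 : (i+(n-1)) % n = if i = 0 then n-1 else i-1 := by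
    rw [mod2n' (by omega)]; split_ifs <;> omega
  have e2 : (i+(n-2)) % n = if i = 0 then n-2 else if i = 1 then n-1 else i-2 := by
    rw [mod2n' (by omega)]; split_ifs <;> omega
  rw [e1, e2]
  have h3 : n % 3 = 0 ∨ n % 3 = 1 ∨ n % 3 = 2 := by omega
  rcases h3 with h3 | h3 | h3 <;>
    simp only [vv, h3, if_true, if_false, reduceIte, show (0:ℕ) ≠ 1 by omega,
      show ¬(1:ℕ) = 0 by omega, show ¬(2:ℕ) = 0 by omega, show ¬(2:ℕ) = 1 by omega] <;>
    split_ifs <;> omega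

private lemma APm {n : ℕ} (hn : 3 ≤ n) : cycleActivation n * Pm n = Mg n := by
  ext i j
  rw [mul_apply]
  set jp : Fin n := ⟨((j:ℕ)+1) % n, Nat.mod_lt _ (by omega)⟩ with hjp
  have hP : ∀ k : Fin n, Pm n k j = if k = jp then 1 else 0 := by
    intro k
    simp only [Pm, of_apply, Fin.ext_iff, hjp]
    exact if_congr (by omega) rfl rfl
  simp only [hP, mul_ite, mul_one, mul_zero]
  rw [Finset.sum_ite_eq' Finset.univ jp (fun k => cycleActivation n i k)]
  simp only [Finset.mem_univ, if_true]
  simp only [cycleActivation, Mg, of_apply, Fin.ext_iff, hjp, Fin.val_mk]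
  have hi := i.isLt; have hj := j.isLt
  refine if_congr ?_ rfl rfl
  obtain ⟨a, ha, ha2⟩ : ∃ a, ((j:ℕ)+1)%n = a ∧ ((a = (j:ℕ)+1 ∧ (j:ℕ)+1 < n) ∨ ((j:ℕ)+1 = n ∧ a = 0)) :=
    ⟨_, rfl, by rw [mod2n' (by omega)]; split_ifs <;> omega⟩
  rw [ha]
  have han : a < n := by omega
  obtain ⟨b, hb, hb2⟩ : ∃ b, (a+1)%n = b ∧ ((b = a+1 ∧ a+1 < n) ∨ (a+1 = n ∧ b = 0)) :=
    ⟨_, rfl, by rw [mod2n' (by omega)]; split_ifs <;> omega⟩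
  rw [hb]
  obtain ⟨c, hc, hc2⟩ : ∃ c, ((i:ℕ)+1)%n = c ∧ ((c = (i:ℕ)+1 ∧ (i:ℕ)+1 < n) ∨ ((i:ℕ)+1 = n ∧ c = 0)) :=
    ⟨_, rfl, by rw [mod2n' (by omega)]; split_ifs <;> omega⟩
  rw [hc]
  obtain ⟨d, hd, hd2⟩ : ∃ d, ((j:ℕ)+2)%n = d ∧ ((d = (j:ℕ)+2 ∧ (j:ℕ)+2 < n) ∨ ((j:ℕ)+2 = n + d ∧ d < n)) :=
    ⟨_, rfl, by rw [mod2n' (by omega)]; split_ifs <;> omega⟩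
  rw [hd]
  omega

private lemma PmPt {n : ℕ} (hn : 3 ≤ n) : Pm n * (Pm n)ᵀ = 1 := by
  ext i j
  rw [mul_apply]
  set im : Fin n := ⟨((i:ℕ)+(n-1)) % n, Nat.mod_lt _ (by omega)⟩ with him
  set jm : Fin n := ⟨((j:ℕ)+(n-1)) % n, Nat.mod_lt _ (by omega)⟩ with hjm
  have key : ∀ (k l : Fin n), (((k:ℕ)+1) % n = (l:ℕ)) ↔
      (k:ℕ) = ((l:ℕ)+(n-1)) % n := by
    intro k l
    rw [mod2n' (by omega), mod2n' (by omega)]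
    have := k.isLt; have := l.isLt
    split_ifs <;> omega
  have hP : ∀ k : Fin n, Pm n i k = if k = im then 1 else 0 := by
    intro k
    simp only [Pm, of_apply, him, Fin.ext_iff, Fin.val_mk]
    exact if_congr (key k i) rfl rfl
  have hQ : ∀ k : Fin n, Pm n j k = if k = jm then 1 else 0 := by
    intro k
    simp only [Pm, of_apply, hjm, Fin.ext_iff, Fin.val_mk]
    exact if_congr (key k j) rfl rfl
  simp only [transpose_apply, hP, hQ, ite_mul, one_mul, zero_mul]
  have : ∀ k : Fin n, (if k = im then (if k = jm then (1:ℤ) else 0) else 0)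
      = if k = im then (if im = jm then (1:ℤ) else 0) else 0 := by
    intro k; split_ifs with h1 h2 h3 <;> simp_all
  simp only [this]
  rw [Finset.sum_ite_eq' Finset.univ im (fun _ => if im = jm then (1:ℤ) else 0)]
  simp only [Finset.mem_univ, if_true, one_apply]
  refine if_congr ?_ rfl rfl
  rw [him, hjm, Fin.ext_iff, Fin.ext_iff]
  simp only [Fin.val_mk]
  rw [mod2n' (by omega), mod2n' (by omega)]
  have := i.isLt; have := j.isLt
  split_ifs <;> omega

private lemma Pm_det {n : ℕ} (hn : 3 ≤ n) : IsUnit (Pm n).det :=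
  IsUnit.of_mul_eq_one ((Pm n)ᵀ.det) (by rw [← det_mul, PmPt hn, det_one])

private lemma Bm_det {n : ℕ} (hn : 3 ≤ n) : (Bm n).det = 1 := by
  rw [det_of_lowerTriangular (Bm n) ?tri]
  case tri =>
    intro i j hij
    rw [OrderDual.toDual_lt_toDual] at hij
    have hi := i.isLt; have hj := j.isLt
    have hlt : (i:ℕ) < (j:ℕ) := hij
    simp only [Bm, of_apply]
    split_ifs <;> first | rfl | omega | simp_all
  refine Finset.prod_eq_one fun i _ => ?_
  have hi := i.isLt
  simp only [Bm, of_apply]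
  split_ifs <;> first | rfl | omega | simp_all

private lemma Vm_det {n : ℕ} (hn : 3 ≤ n) : IsUnit (Vm n).det := by
  have h2 : n - 2 + 2 = n := by omega
  let q : Fin n ≃ Fin (n-2) ⊕ Fin 2 := (finCongr h2.symm).trans finSumFinEquiv.symm
  let C : Matrix (Fin (n-2)) (Fin 2) ℤ :=
    of fun i j => if j = 0 then uu n i else vv n i
  let D : Matrix (Fin 2) (Fin 2) ℤ :=
    !![uu n (n-2), vv n (n-2); uu n (n-1), vv n (n-1)]
  let V2 := fromBlocks (1 : Matrix (Fin (n-2)) (Fin (n-2)) ℤ) C 0 D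
  have hq1 : ∀ (i : Fin n) (h : (i:ℕ) < n-2), q i = Sum.inl ⟨i, h⟩ := by
    intro i h
    have : (finCongr h2.symm) i = Fin.castAdd 2 ⟨(i:ℕ), h⟩ := by
      apply Fin.ext; simp
    simp only [q, Equiv.trans_apply, this, finSumFinEquiv_symm_apply_castAdd]
  have hq2 : ∀ (i : Fin n) (h : ¬ (i:ℕ) < n-2), q i = Sum.inr ⟨(i:ℕ)-(n-2), by omega⟩ := by
    intro i h
    have : (finCongr h2.symm) i = Fin.natAdd (n-2) ⟨(i:ℕ)-(n-2), by omega⟩ := by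
      apply Fin.ext; simp; omega
    simp only [q, Equiv.trans_apply, this, finSumFinEquiv_symm_apply_natAdd]
  have hV : Vm n = V2.submatrix q q := by
    ext i j
    rw [submatrix_apply]
    by_cases hi : (i:ℕ) < n-2 <;> by_cases hj : (j:ℕ) < n-2
    · rw [hq1 i hi, hq1 j hj]
      simp only [Vm, V2, of_apply, fromBlocks_apply₁₁, one_apply, if_pos hj, Fin.mk.injEq]
    · rw [hq1 i hi, hq2 j hj]
      have hj1 : (j:ℕ) = n-2 ∨ (j:ℕ) = n-1 := by have := j.isLt; omega
      simp only [Vm, V2, of_apply, fromBlocks_apply₁₂, if_neg hj, C]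
      rcases hj1 with hj1 | hj1
      · rw [if_pos hj1, if_pos (by apply Fin.ext; simp [hj1])]
      · rw [if_neg (by omega), if_neg (by
          intro hcon
          have := congrArg Fin.val hcon
          simp at this
          omega)]
    · rw [hq2 i hi, hq1 j hj]
      simp only [Vm, V2, of_apply, fromBlocks_apply₂₁, Matrix.zero_apply, if_pos hj]
      rw [if_neg (by omega)]
    · rw [hq2 i hi, hq2 j hj]
      have hi1 : (i:ℕ) = n-2 ∨ (i:ℕ) = n-1 := by have := i.isLt; omega
      have hj1 : (j:ℕ) = n-2 ∨ (j:ℕ) = n-1 := by have := j.isLt; omega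
      simp only [Vm, V2, of_apply, fromBlocks_apply₂₂, if_neg hj, D]
      have e1 : n-1-(n-2) = 1 := by omega
      rcases hi1 with hi1 | hi1 <;> rcases hj1 with hj1 | hj1 <;>
          simp only [hi1, hj1, Nat.sub_self, e1, Fin.mk_zero, Fin.mk_one,
            Matrix.cons_val_zero, Matrix.cons_val_one, Matrix.head_cons,
            Matrix.cons_val', Matrix.empty_val', Matrix.cons_val_fin_one,
            Matrix.head_fin_const]
      · simp
      · rw [if_neg (by omega)]
      · simp
      · rw [if_neg (by omega)]
  rw [hV, det_submatrix_equiv_self q V2]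
  have hdet : V2.det = D.det := by
    rw [show V2 = fromBlocks 1 C 0 D from rfl, det_fromBlocks_zero₂₁, det_one, one_mul]
  rw [hdet]
  have h3 : n % 3 = 0 ∨ n % 3 = 1 ∨ n % 3 = 2 := by omega
  have hval : uu n (n-2) * vv n (n-1) - vv n (n-2) * uu n (n-1) = 1 := by
    unfold uu vv
    rcases h3 with h3 | h3 | h3 <;> simp only [h3] <;> norm_num <;>
      split_ifs <;> first | rfl | omega | norm_num | skip
  rw [show D.det = uu n (n-2) * vv n (n-1) - vv n (n-2) * uu n (n-1) from by
    simp only [D, det_fin_two_of]; try ring]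
  rw [hval]
  exact isUnit_one

private lemma main_eq {n : ℕ} (hn : 3 ≤ n) :
    Mg n * Vm n = Bm n * Matrix.diagonal (Dd n) := by
  ext i j
  rw [mul_diagonal, mul_apply]
  have hi := i.isLt; have hj' := j.isLt
  by_cases hj : (j:ℕ) < n-2
  · have hVm : ∀ k : Fin n, Vm n k j = if k = j then 1 else 0 := fun k => by
      simp only [Vm, of_apply, if_pos hj]
      exact if_congr (by rw [Fin.ext_iff]) rfl rfl
    simp only [hVm, mul_ite, mul_one, mul_zero]
    rw [Finset.sum_ite_eq' Finset.univ j (fun k => Mg n i k)]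
    simp only [Finset.mem_univ, if_true]
    have hdd : Dd n j = 1 := by
      simp only [Dd]; split_ifs <;> first | rfl | omega
    rw [hdd, mul_one]
    simp only [Mg, Bm, of_apply, if_pos hj]
    refine if_congr ?_ rfl rfl
    rw [Nat.mod_eq_of_lt (show (j:ℕ)+1 < n by omega),
        Nat.mod_eq_of_lt (show (j:ℕ)+2 < n by omega)]
  · set i1 : Fin n := ⟨((i:ℕ)+(n-1)) % n, Nat.mod_lt _ (by omega)⟩ with hi1
    set i2 : Fin n := ⟨((i:ℕ)+(n-2)) % n, Nat.mod_lt _ (by omega)⟩ with hi2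
    have hsplit : ∀ k : Fin n, Mg n i k =
        (if k = i then 1 else 0) + (if k = i1 then 1 else 0) + (if k = i2 then 1 else 0) := by
      intro k
      have hk := k.isLt
      simp only [Mg, of_apply, Fin.ext_iff, hi1, hi2, Fin.val_mk]
      obtain ⟨a, ha, ha2⟩ : ∃ a, ((k:ℕ)+1)%n = a ∧
          ((a = (k:ℕ)+1 ∧ (k:ℕ)+1 < n) ∨ ((k:ℕ)+1 = n ∧ a = 0)) :=
        ⟨_, rfl, by rw [mod2n' (by omega)]; split_ifs <;> omega⟩
      obtain ⟨b, hb, hb2⟩ : ∃ b, ((k:ℕ)+2)%n = b ∧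
          ((b = (k:ℕ)+2 ∧ (k:ℕ)+2 < n) ∨ ((k:ℕ)+2 = n + b ∧ b < n)) :=
        ⟨_, rfl, by rw [mod2n' (by omega)]; split_ifs <;> omega⟩
      obtain ⟨c, hc, hc2⟩ : ∃ c, ((i:ℕ)+(n-1))%n = c ∧
          ((c = (i:ℕ)+(n-1) ∧ (i:ℕ)+(n-1) < n) ∨ ((i:ℕ)+(n-1) = n + c ∧ c < n)) :=
        ⟨_, rfl, by rw [mod2n' (by omega)]; split_ifs <;> omega⟩
      obtain ⟨d, hd, hd2⟩ : ∃ d, ((i:ℕ)+(n-2))%n = d ∧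
          ((d = (i:ℕ)+(n-2) ∧ (i:ℕ)+(n-2) < n) ∨ ((i:ℕ)+(n-2) = n + d ∧ d < n)) :=
        ⟨_, rfl, by rw [mod2n' (by omega)]; split_ifs <;> omega⟩
      rw [ha, hb, hc, hd]
      split_ifs <;> omega
    simp only [hsplit, add_mul, Finset.sum_add_distrib, ite_mul, one_mul, zero_mul]
    rw [Finset.sum_ite_eq' Finset.univ i (fun k => Vm n k j),
        Finset.sum_ite_eq' Finset.univ i1 (fun k => Vm n k j),
        Finset.sum_ite_eq' Finset.univ i2 (fun k => Vm n k j)]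
    simp only [Finset.mem_univ, if_true]
    have h30 : (3 ∣ n) ↔ n % 3 = 0 := by omega
    have hj2 : (j:ℕ) = n-2 ∨ (j:ℕ) = n-1 := by omega
    rcases hj2 with hj2 | hj2
    · have hVm : ∀ k : Fin n, Vm n k j = uu n k := fun k => by
        simp only [Vm, of_apply, if_neg hj, if_pos hj2]
      rw [hVm, hVm, hVm, hi1, hi2]
      simp only [Fin.val_mk]
      rw [L1 hn hi]
      simp only [Bm, Dd, of_apply, if_neg hj, if_pos hj2]
      split_ifs <;> first | rfl | omega | norm_num
    · have hVm : ∀ k : Fin n, Vm n k j = vv n k := fun k => by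
        simp only [Vm, of_apply, if_neg hj, if_neg (show ¬ (j:ℕ) = n-2 by omega)]
      rw [hVm, hVm, hVm, hi1, hi2]
      simp only [Fin.val_mk]
      rw [L2 hn hi]
      simp only [Bm, Dd, of_apply, if_neg hj, if_neg (show ¬ (j:ℕ) = n-2 by omega)]
      split_ifs <;> first | rfl | omega | norm_num

/-- The elementary divisors of the cycle graph `C_n` (`n ≥ 3`) are `(1^{n-2}, 0, 0)`
when `3 ∣ n`, and `(1^{n-1}, 3)` otherwise. -/
theorem stmt_13 (n : ℕ) (hn : 3 ≤ n) :
    ∃ U V : Matrix (Fin n) (Fin n) ℤ, IsUnit U.det ∧ IsUnit V.det ∧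
      U * cycleActivation n * V =
        Matrix.diagonal (fun i : Fin n =>
          if 3 ∣ n then (if n - 2 ≤ (i : ℕ) then 0 else 1)
          else (if (i : ℕ) = n - 1 then 3 else 1)) := by
  have hB : IsUnit (Bm n).det := by rw [Bm_det hn]; exact isUnit_one
  refine ⟨(Bm n)⁻¹, Pm n * Vm n, Matrix.isUnit_nonsing_inv_det _ hB, ?_, ?_⟩
  · rw [det_mul]; exact (Pm_det hn).mul (Vm_det hn)
  · have key : cycleActivation n * (Pm n * Vm n) = Bm n * Matrix.diagonal (Dd n) := by
      rw [← Matrix.mul_assoc, APm hn, main_eq hn]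
    calc (Bm n)⁻¹ * cycleActivation n * (Pm n * Vm n)
        = (Bm n)⁻¹ * (cycleActivation n * (Pm n * Vm n)) := by rw [Matrix.mul_assoc]
      _ = (Bm n)⁻¹ * (Bm n * Matrix.diagonal (Dd n)) := by rw [key]
      _ = ((Bm n)⁻¹ * Bm n) * Matrix.diagonal (Dd n) := by rw [Matrix.mul_assoc]
      _ = Matrix.diagonal (Dd n) := by rw [Matrix.nonsing_inv_mul _ hB, Matrix.one_mul]
end

section
/- Let Γ be a finite simple graph containing a vertex u with neighbors v and w such that u is the only common neighbor of v and w (in closed neighborhoods: B(v) ∩ B(w) = {u}). Then for every group G and all g, h ∈ G, the element of G^n with [g,h] in coordinate u and identity elsewhere lies in G^Γ; indeed it equals [g^v, h^w]. -/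
open scoped commutatorElement

open Classical in
/-- If `u` has neighbors `v`, `w` whose closed neighborhoods intersect exactly in `{u}`,
then for all `g, h ∈ G` the element with `[g,h]` at `u` and identity elsewhere lies in
`G^Γ`; indeed it equals `[g^v, h^w]`. -/
theorem stmt_16 {V : Type*} [Fintype V] (Γ : SimpleGraph V) (u v w : V)
    (huv : Γ.Adj u v) (huw : Γ.Adj u w)
    (hB : ∀ z, ((z = v ∨ Γ.Adj v z) ∧ (z = w ∨ Γ.Adj w z)) ↔ z = u)
    (G : Type*) [Group G] (g h : G) :
    (fun z => if z = u then ⁅g, h⁆ else 1) ∈ graphPower Γ G ∧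
      (fun z => if z = u then ⁅g, h⁆ else 1) = ⁅click Γ g v, click Γ h w⁆ := by
  have heq : (fun z => if z = u then ⁅g, h⁆ else 1) = ⁅click Γ g v, click Γ h w⁆ := by
    funext z
    have hz : ⁅click Γ g v, click Γ h w⁆ z = ⁅click Γ g v z, click Γ h w z⁆ := rfl
    rw [hz]
    unfold click
    by_cases hu : z = u
    · subst hu
      have := (hB z).mpr rfl
      simp [this.1, this.2]
    · simp only [hu, if_neg]
      by_cases h1 : z = v ∨ Γ.Adj v z
      · have h2 : ¬(z = w ∨ Γ.Adj w z) := fun h2 => hu ((hB z).mp ⟨h1, h2⟩)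
        simp [h1, h2]
      · simp [h1]
  refine ⟨heq ▸ ?_, heq⟩
  have h1 := Subgroup.subset_closure (G := V → G) (k := {f | ∃ (g : G) (v : V), f = click Γ g v}) ⟨g, v, rfl⟩
  have h2 := Subgroup.subset_closure (G := V → G) (k := {f | ∃ (g : G) (v : V), f = click Γ g v}) ⟨h, w, rfl⟩
  exact mul_mem (mul_mem (mul_mem h1 h2) (inv_mem h1)) (inv_mem h2)
end

section
/- Let Γ be a connected triangle-free finite simple graph and G a group. If there exists a vertex v such that for all g, h ∈ G the element [g,h]^{e_v} (with [g,h] at coordinate v and identity elsewhere) lies in G^Γ, then [g,h]^{e_u} ∈ G^Γ for every vertex u and all g, h ∈ G; consequently [G,G]^{|Γ|} ≤ G^Γ, i.e., Γ is G-RA. -/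
open scoped commutatorElement

section Aux

open Classical

variable {V : Type*} {G : Type*} [Group G] (Γ : SimpleGraph V)

lemma click_mem_aux (g : G) (u : V) : click Γ g u ∈ graphPower Γ G :=
  Subgroup.subset_closure ⟨g, u, rfl⟩

lemma comm_click_aux (htri : Γ.CliqueFree 3) {u w : V} (hadj : Γ.Adj u w) (g h : G) :
    ⁅click Γ g u, click Γ h w⁆ = fun z => if z = u ∨ z = w then ⁅g, h⁆ else 1 := by
  funext z
  have hz : ⁅click Γ g u, click Γ h w⁆ z = ⁅click Γ g u z, click Γ h w z⁆ := rfl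
  rw [hz]
  unfold click
  by_cases hu : z = u
  · subst hu
    simp [hadj, hadj.symm]
  · by_cases hw : z = w
    · subst hw
      simp [hadj, hu]
    · by_cases ha : Γ.Adj u z
      · by_cases hb : Γ.Adj w z
        · exact absurd (SimpleGraph.is3Clique_triple_iff.2 ⟨hadj, ha, hb⟩) (htri {u, w, z})
        · simp [ha, hb, hu, hw]
      · simp [ha, hu, hw]

lemma step_aux (htri : Γ.CliqueFree 3) {u w : V} (hadj : Γ.Adj u w)
    (hu : ∀ g h : G, (fun z => if z = u then ⁅g, h⁆ else 1) ∈ graphPower Γ G) :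
    ∀ g h : G, (fun z => if z = w then ⁅g, h⁆ else 1) ∈ graphPower Γ G := by
  intro g h
  have key : (fun z => if z = w then ⁅g, h⁆ else 1) =
      (fun z => if z = u then ⁅g, h⁆ else 1)⁻¹ * ⁅click Γ g u, click Γ h w⁆ := by
    rw [comm_click_aux Γ htri hadj]
    funext z
    by_cases hzu : z = u
    · subst hzu
      simp [hadj.ne]
      group
    · by_cases hzw : z = w <;> simp [hzu, hzw, hadj.ne']
  rw [key]
  refine mul_mem (inv_mem (hu g h)) ?_
  have hA := click_mem_aux Γ g u
  have hB := click_mem_aux Γ h w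
  rw [commutatorElement_def]
  exact mul_mem (mul_mem (mul_mem hA hB) (inv_mem hA)) (inv_mem hB)

lemma single_eq_aux (u : V) (c : G) :
    Pi.mulSingle u c = fun z => if z = u then c else 1 := by
  funext z
  by_cases h : z = u <;> simp [Pi.mulSingle_apply, h]

end Aux

open Classical in
/-- In a connected triangle-free graph, if some vertex `v` satisfies
`[g,h]^{e_v} ∈ G^Γ` for all `g, h`, then the same holds at every vertex, and consequently
`[G,G]^{|Γ|} ≤ G^Γ`, i.e. `Γ` is `G`-RA. -/
theorem stmt_17 {V : Type*} [Fintype V] (Γ : SimpleGraph V)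
    (hconn : Γ.Connected) (htri : Γ.CliqueFree 3)
    (G : Type*) [Group G] (v : V)
    (hv : ∀ g h : G, (fun z => if z = v then ⁅g, h⁆ else 1) ∈ graphPower Γ G) :
    (∀ (u : V) (g h : G),
        (fun z => if z = u then ⁅g, h⁆ else 1) ∈ graphPower Γ G) ∧
      (∀ f : V → G, (∀ i, f i ∈ commutator G) → f ∈ graphPower Γ G) := by
  have aux : ∀ {a b : V} (_ : Γ.Walk a b),
      (∀ g h : G, (fun z => if z = a then ⁅g, h⁆ else 1) ∈ graphPower Γ G) →
      ∀ g h : G, (fun z => if z = b then ⁅g, h⁆ else 1) ∈ graphPower Γ G := by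
    intro a b p
    induction p with
    | nil => exact id
    | cons hadj _ ih => exact fun ha => ih (step_aux Γ htri hadj ha)
  have part1 : ∀ (u : V) (g h : G),
      (fun z => if z = u then ⁅g, h⁆ else 1) ∈ graphPower Γ G :=
    fun u => aux ((hconn.preconnected v u).some) hv
  refine ⟨part1, ?_⟩
  intro f hf
  have hsingle : ∀ u : V, Pi.mulSingle u (f u) ∈ graphPower Γ G := by
    intro u
    have hle : commutator G ≤
        (graphPower Γ G).comap (MonoidHom.mulSingle (fun _ : V => G) u) := by
      rw [commutator_def, Subgroup.commutator_le]
      intro g _ h _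
      show Pi.mulSingle u ⁅g, h⁆ ∈ graphPower Γ G
      rw [single_eq_aux]
      exact part1 u g h
    exact hle (hf u)
  have := Subgroup.noncommProd_mem (graphPower Γ G)
    (t := Finset.univ) (f := fun i => Pi.mulSingle i (f i))
    (fun i _ j _ _ => Pi.mulSingle_apply_commute f i j) (fun i _ => hsingle i)
  rwa [Finset.noncommProd_mulSingle] at this
end

section
/- Every connected finite simple graph Γ with at least 3 vertices and girth at least 5 is RA: for every group G, the group generated by the commutators [g^u, h^v] over distinct vertices u ≠ v and g, h ∈ G equals [G,G]^{|Γ|}; in particular [G,G]^{|Γ|} ≤ G^Γ. -/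
open scoped commutatorElement

namespace StmtAux18
open SimpleGraph

variable {V : Type*} {Γ : SimpleGraph V} {G : Type*} [Group G]

lemma cycle_len_ge (hg : 5 ≤ Γ.girth) {a : V} (w : Γ.Walk a a) (hw : w.IsCycle) :
    5 ≤ w.length := by
  have h1 : Γ.egirth ≤ w.length := by
    rw [egirth]
    exact iInf_le_of_le a (iInf_le_of_le w (iInf_le _ hw))
  have h2 : Γ.girth ≤ w.length := by
    have := ENat.toNat_le_toNat h1 (by simp)
    simpa [girth] using this
  omega

lemma no_triangle (hg : 5 ≤ Γ.girth) {a b c : V} (hab : Γ.Adj a b) (hbc : Γ.Adj b c)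
    (hca : Γ.Adj c a) : False := by
  have hc : (Walk.cons hab (.cons hbc (.cons hca .nil)) : Γ.Walk a a).IsCycle := by
    rw [Walk.cons_isCycle_iff]
    constructor
    · simp [Walk.isPath_def, hab.ne, hbc.ne, hca.ne, hab.ne', hbc.ne', hca.ne']
    · simp [Sym2.eq_iff, hab.ne, hbc.ne, hca.ne, hab.ne', hbc.ne', hca.ne']
  have := cycle_len_ge hg _ hc
  simp [Walk.length_cons] at this

lemma no_square (hg : 5 ≤ Γ.girth) {u v w x : V} (huv : u ≠ v) (hwx : w ≠ x)
    (h1 : Γ.Adj u w) (h2 : Γ.Adj w v) (h3 : Γ.Adj v x) (h4 : Γ.Adj x u) : False := by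
  have hc : (Walk.cons h1 (.cons h2 (.cons h3 (.cons h4 .nil))) : Γ.Walk u u).IsCycle := by
    rw [Walk.cons_isCycle_iff]
    constructor
    · simp [Walk.isPath_def, h1.ne, h2.ne, h3.ne, h4.ne, h1.ne', h2.ne', h3.ne', h4.ne',
        huv, huv.symm, hwx, hwx.symm]
    · simp [Sym2.eq_iff, h1.ne, h2.ne, h3.ne, h4.ne, h1.ne', h2.ne', h3.ne', h4.ne',
        huv, huv.symm, hwx, hwx.symm]
  have := cycle_len_ge hg _ hc
  simp [Walk.length_cons] at this

lemma walk_stay {S : Set V} (hS : ∀ a b, a ∈ S → Γ.Adj a b → b ∈ S) :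
    ∀ {a b : V}, Γ.Walk a b → a ∈ S → b ∈ S := by
  intro a b p
  induction p with
  | nil => exact id
  | cons h q ih => exact fun ha => ih (hS _ _ ha h)

lemma exists_adj [Fintype V] (hconn : Γ.Connected) (h2 : 2 ≤ Fintype.card V) (w : V) :
    ∃ x, Γ.Adj w x := by
  obtain ⟨z, hz⟩ := Fintype.exists_ne_of_one_lt_card (by omega) w
  obtain ⟨p⟩ := hconn.preconnected w z
  cases p with
  | nil => exact absurd rfl hz
  | cons h q => exact ⟨_, h⟩

lemma second_nbr [Fintype V] (hconn : Γ.Connected) (hcard : 3 ≤ Fintype.card V)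
    {w x : V} (hwx : Γ.Adj w x) (huniq : ∀ y, Γ.Adj w y → y = x) :
    ∃ y, Γ.Adj x y ∧ y ≠ w := by
  classical
  by_contra hc
  push_neg at hc
  have hstay : ∀ {a b : V}, Γ.Walk a b → a ∈ ({w, x} : Set V) → b ∈ ({w, x} : Set V) :=
    walk_stay (by
      rintro a b (rfl | rfl) hab
      · exact Or.inr (huniq _ hab)
      · exact Or.inl (hc _ hab))
  have hall : (Finset.univ : Finset V) ⊆ {w, x} := by
    intro z _
    have hz := hstay (hconn.preconnected w z).some (Or.inl rfl)
    simpa using hz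
  have h1 := Finset.card_le_card hall
  have h2 : ({w, x} : Finset V).card ≤ 2 :=
    (Finset.card_insert_le _ _).trans (by simp)
  rw [Finset.card_univ] at h1
  omega

open Classical in
lemma comm_apply (g h : G) (u v w : V) :
    ⁅click Γ g u, click Γ h v⁆ w =
      if (w = u ∨ Γ.Adj u w) ∧ (w = v ∨ Γ.Adj v w) then ⁅g, h⁆ else 1 := by
  simp only [commutatorElement_def, Pi.mul_apply, Pi.inv_apply, click]
  by_cases h1 : w = u ∨ Γ.Adj u w <;> by_cases h2 : w = v ∨ Γ.Adj v w <;>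
    simp [h1, h2]

lemma single_of_two [DecidableEq V] (hg : 5 ≤ Γ.girth) {w u v : V} (hu : Γ.Adj w u) (hv : Γ.Adj w v)
    (huv : u ≠ v) (g h : G) :
    ⁅click Γ g u, click Γ h v⁆ = Pi.mulSingle w ⁅g, h⁆ := by
  funext y
  have hiff : ((y = u ∨ Γ.Adj u y) ∧ (y = v ∨ Γ.Adj v y)) ↔ y = w := by
    constructor
    · rintro ⟨rfl | h1, h2⟩
      · rcases h2 with rfl | h2
        · exact absurd rfl huv
        · exact (no_triangle hg hu h2.symm hv.symm).elim
      · rcases h2 with rfl | h2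
        · exact (no_triangle hg hv h1.symm hu.symm).elim
        · by_contra hyw
          exact no_square hg huv hyw h1 h2.symm hv.symm hu
    · rintro rfl
      exact ⟨Or.inr hu.symm, Or.inr hv.symm⟩
  rw [comm_apply, Pi.mulSingle_apply]
  by_cases hyw : y = w
  · rw [if_pos (hiff.mpr hyw), if_pos hyw]
  · rw [if_neg (fun hcond => hyw (hiff.mp hcond)), if_neg hyw]

lemma double [DecidableEq V] (hg : 5 ≤ Γ.girth) {w x : V} (hwx : Γ.Adj w x) (g h : G) :
    ⁅click Γ g w, click Γ h x⁆ = Pi.mulSingle w ⁅g, h⁆ * Pi.mulSingle x ⁅g, h⁆ := by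
  funext y
  rw [comm_apply]
  simp only [Pi.mul_apply, Pi.mulSingle_apply]
  by_cases h1 : y = w
  · subst h1
    simp [hwx.ne, hwx.symm]
  · by_cases h2 : y = x
    · subst h2
      simp [hwx.ne', hwx, h1]
    · have hcond : ¬((y = w ∨ Γ.Adj w y) ∧ (y = x ∨ Γ.Adj x y)) := by
        rintro ⟨rfl | ha, rfl | hb⟩
        · exact h1 rfl
        · exact h1 rfl
        · exact h2 rfl
        · exact no_triangle hg hwx hb ha.symm
      rw [if_neg hcond, if_neg h1, if_neg h2, one_mul]

variable (Γ G) in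
noncomputable def genSet : Set (V → G) :=
  {f : V → G | ∃ (g h : G) (u v : V), u ≠ v ∧ f = ⁅click Γ g u, click Γ h v⁆}

lemma single_mem [Fintype V] [DecidableEq V] (hconn : Γ.Connected) (hcard : 3 ≤ Fintype.card V)
    (hg : 5 ≤ Γ.girth) (w : V) (g h : G) :
    Pi.mulSingle w ⁅g, h⁆ ∈ Subgroup.closure (genSet Γ G) := by
  obtain ⟨x, hwx⟩ := exists_adj hconn (by omega) w
  by_cases hdeg : ∃ u, Γ.Adj w u ∧ u ≠ x
  · obtain ⟨u, hu, hux⟩ := hdeg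
    rw [← single_of_two hg hu hwx hux]
    exact Subgroup.subset_closure ⟨g, h, u, x, hux, rfl⟩
  · push_neg at hdeg
    obtain ⟨y, hxy, hyw⟩ := second_nbr hconn hcard hwx hdeg
    have hx_single : Pi.mulSingle x ⁅g, h⁆ ∈ Subgroup.closure (genSet Γ G) := by
      rw [← single_of_two hg hwx.symm hxy (Ne.symm hyw)]
      exact Subgroup.subset_closure ⟨g, h, w, y, Ne.symm hyw, rfl⟩
    have key : ⁅click Γ g w, click Γ h x⁆ ∈ Subgroup.closure (genSet Γ G) :=
      Subgroup.subset_closure ⟨g, h, w, x, hwx.ne, rfl⟩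
    have heq : Pi.mulSingle w ⁅g, h⁆ =
        ⁅click Γ g w, click Γ h x⁆ * (Pi.mulSingle x ⁅g, h⁆)⁻¹ := by
      rw [double hg hwx, mul_inv_cancel_right]
    rw [heq]
    exact mul_mem key (inv_mem hx_single)

lemma single_mem' [Fintype V] [DecidableEq V] (hconn : Γ.Connected) (hcard : 3 ≤ Fintype.card V)
    (hg : 5 ≤ Γ.girth) (w : V) {c : G} (hc : c ∈ commutator G) :
    Pi.mulSingle w c ∈ Subgroup.closure (genSet Γ G) := by
  rw [commutator_eq_closure] at hc
  induction hc using Subgroup.closure_induction with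
  | mem c hc =>
    obtain ⟨g, h, rfl⟩ := hc
    exact single_mem hconn hcard hg w g h
  | one => rw [Pi.mulSingle_one]; exact one_mem _
  | mul a b _ _ ha hb => rw [Pi.mulSingle_mul]; exact mul_mem ha hb
  | inv a _ ha => rw [Pi.mulSingle_inv]; exact inv_mem ha

end StmtAux18

/-- A connected graph with at least 3 vertices and girth at least 5 is strongly RA:
for every group `G`, the subgroup generated by the commutators `[g^u, h^v]` over distinct
vertices `u ≠ v` equals `[G,G]^{|Γ|}`; in particular `[G,G]^{|Γ|} ≤ G^Γ`. -/
theorem stmt_18 {V : Type*} [Fintype V] (Γ : SimpleGraph V)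
    (hconn : Γ.Connected) (hcard : 3 ≤ Fintype.card V) (hgirth : 5 ≤ Γ.girth)
    (G : Type*) [Group G] :
    Subgroup.closure {f : V → G | ∃ (g h : G) (u v : V), u ≠ v ∧
        f = ⁅click Γ g u, click Γ h v⁆} =
      Subgroup.pi Set.univ (fun _ : V => commutator G) ∧
    Subgroup.pi Set.univ (fun _ : V => commutator G) ≤ graphPower Γ G := by
  have hSet : {f : V → G | ∃ (g h : G) (u v : V), u ≠ v ∧
      f = ⁅click Γ g u, click Γ h v⁆} = StmtAux18.genSet Γ G := rfl
  classical
  have hmain : Subgroup.closure (StmtAux18.genSet Γ G) =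
      Subgroup.pi Set.univ (fun _ : V => commutator G) := by
    apply le_antisymm
    · rw [Subgroup.closure_le]
      rintro f ⟨g, h, u, v, huv, rfl⟩
      rw [SetLike.mem_coe, Subgroup.mem_pi]
      intro w _
      rw [StmtAux18.comm_apply]
      split_ifs
      · rw [commutator_def]
        exact Subgroup.commutator_mem_commutator (Subgroup.mem_top g) (Subgroup.mem_top h)
      · exact one_mem _
    · intro f hf
      rw [Subgroup.mem_pi] at hf
      refine Subgroup.pi_mem_of_mulSingle_mem f fun w => ?_
      exact StmtAux18.single_mem' hconn hcard hgirth w (hf w (Set.mem_univ w))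
  constructor
  · rw [hSet, hmain]
  · rw [← hmain]
    rw [Subgroup.closure_le]
    rintro f ⟨g, h, u, v, _, rfl⟩
    have hg : click Γ g u ∈ graphPower Γ G := Subgroup.subset_closure ⟨g, u, rfl⟩
    have hh : click Γ h v ∈ graphPower Γ G := Subgroup.subset_closure ⟨h, v, rfl⟩
    rw [commutatorElement_def]
    exact mul_mem (mul_mem (mul_mem hg hh) (inv_mem hg)) (inv_mem hh)
end
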